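/- Define I(a,b) = ∫_0^∞ φ_a(x) φ_b(x) ω_0(x) dx for normalized Hermite polynomials. Then the recursion I(a+1, b+1) = (φ_{a+1}(0) φ_b(0) ω_0(0) + √(a+1) I(a,b))/√(b+1) holds for all a, b ≥ 0. -/

import Mathlib

open MeasureTheory

noncomputable def phi : ℕ → ℝ → ℝ
  | 0 => fun _ => 1
  | 1 => fun x => x
  | (n + 2) => fun x =>
      (x * phi (n + 1) x - Real.sqrt ((n : ℝ) + 1) * phi n x) / Real.sqrt ((n : ℝ) + 2)

noncomputable def ω0 (x : ℝ) : ℝ := (Real.sqrt (2 * Real.pi))⁻¹ * Real.exp (-x ^ 2 / 2)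

noncomputable def Ih (a b : ℕ) : ℝ := ∫ x in Set.Ioi (0 : ℝ), phi a x * phi b x * ω0 x

lemma phi_poly : ∀ n : ℕ, ∃ p : Polynomial ℝ, ∀ x, phi n x = p.eval x := by
  have H : ∀ n : ℕ, (∃ p : Polynomial ℝ, ∀ x, phi n x = p.eval x) ∧
      (∃ p : Polynomial ℝ, ∀ x, phi (n + 1) x = p.eval x) := by
    intro n
    induction n with
    | zero =>
      exact ⟨⟨1, fun x => by simp [phi]⟩, ⟨Polynomial.X, fun x => by simp [phi]⟩⟩
    | succ n ih =>
      obtain ⟨⟨p, hp⟩, ⟨q, hq⟩⟩ := ih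
      refine ⟨⟨q, hq⟩, ⟨(Polynomial.X * q - Polynomial.C (Real.sqrt ((n : ℝ) + 1)) * p) *
        Polynomial.C (Real.sqrt ((n : ℝ) + 2))⁻¹, fun x => ?_⟩⟩
      show phi (n + 2) x = _
      simp [phi, hp x, hq x, div_eq_mul_inv]
  exact fun n => (H n).1

lemma phi_two (x : ℝ) : phi 2 x = (x * x - Real.sqrt 1 * 1) / Real.sqrt 2 := by
  show (x * phi 1 x - Real.sqrt ((0:ℕ) + 1) * phi 0 x) / Real.sqrt ((0:ℕ) + 2) = _
  norm_num [phi]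

lemma phi_hasDerivAt : ∀ (n : ℕ) (x : ℝ),
    HasDerivAt (phi (n + 1)) (Real.sqrt ((n : ℝ) + 1) * phi n x) x := by
  have H : ∀ n : ℕ, (∀ x, HasDerivAt (phi (n + 1)) (Real.sqrt ((n : ℝ) + 1) * phi n x) x) ∧
      (∀ x, HasDerivAt (phi (n + 2)) (Real.sqrt ((n : ℝ) + 2) * phi (n + 1) x) x) := by
    intro n
    induction n with
    | zero =>
      constructor
      · intro x
        have : phi 1 = fun x : ℝ => x := rfl
        rw [this]
        have h1 : HasDerivAt (fun x : ℝ => x) 1 x := hasDerivAt_id x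
        convert h1 using 1
        norm_num [phi]
      · intro x
        have h2 : phi 2 = fun x : ℝ => (x * x - Real.sqrt 1 * 1) / Real.sqrt 2 := by
          funext y; exact phi_two y
        rw [h2]
        have hd : HasDerivAt (fun x : ℝ => (x * x - Real.sqrt 1 * 1) / Real.sqrt 2)
            ((1 * x + x * 1) / Real.sqrt 2) x :=
          (((hasDerivAt_id x).mul (hasDerivAt_id x)).sub_const _).div_const _
        convert hd using 1
        have hs : Real.sqrt 2 ≠ 0 := by positivity
        have h22 : Real.sqrt 2 * Real.sqrt 2 = 2 := Real.mul_self_sqrt (by norm_num)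
        have : phi 1 x = x := rfl
        rw [show ((0:ℕ):ℝ) + 2 = 2 by norm_num, this]
        field_simp
        linear_combination x * h22
    | succ n ih =>
      obtain ⟨ih1, ih2⟩ := ih
      have e2 : ((n + 1 : ℕ) : ℝ) + 1 = (n : ℝ) + 2 := by push_cast; ring
      have e3 : ((n + 1 : ℕ) : ℝ) + 2 = (n : ℝ) + 3 := by push_cast; ring
      constructor
      · intro x
        show HasDerivAt (phi (n + 2)) (Real.sqrt (((n+1:ℕ):ℝ) + 1) * phi (n + 1) x) x
        rw [e2]; exact ih2 x
      · intro x
        show HasDerivAt (phi (n + 3)) (Real.sqrt (((n+1:ℕ):ℝ) + 2) * phi (n + 2) x) x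
        rw [e3]
        have heq : phi (n + 3) = fun y =>
            (y * phi (n + 2) y - Real.sqrt ((n : ℝ) + 2) * phi (n + 1) y)
              / Real.sqrt ((n : ℝ) + 3) := by
          funext y
          show phi ((n + 1) + 2) y = _
          simp only [phi, e2, e3]
        rw [heq]
        have hd : HasDerivAt (fun y =>
            (y * phi (n + 2) y - Real.sqrt ((n : ℝ) + 2) * phi (n + 1) y) / Real.sqrt ((n : ℝ) + 3))
            ((1 * phi (n + 2) x + x * (Real.sqrt ((n : ℝ) + 2) * phi (n + 1) x)
              - Real.sqrt ((n : ℝ) + 2) * (Real.sqrt ((n : ℝ) + 1) * phi n x))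
                / Real.sqrt ((n : ℝ) + 3)) x :=
          (((hasDerivAt_id x).mul (ih2 x)).sub ((ih1 x).const_mul _)).div_const _
        convert hd using 1
        have hphi : phi (n + 2) x
            = (x * phi (n + 1) x - Real.sqrt ((n : ℝ) + 1) * phi n x) / Real.sqrt ((n : ℝ) + 2) :=
          rfl
        have hs2 : Real.sqrt ((n : ℝ) + 2) ≠ 0 := by positivity
        have hs3 : Real.sqrt ((n : ℝ) + 3) ≠ 0 := by positivity
        have h22 : Real.sqrt ((n : ℝ) + 2) * Real.sqrt ((n : ℝ) + 2) = (n : ℝ) + 2 :=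
          Real.mul_self_sqrt (by positivity)
        have h33 : Real.sqrt ((n : ℝ) + 3) * Real.sqrt ((n : ℝ) + 3) = (n : ℝ) + 3 :=
          Real.mul_self_sqrt (by positivity)
        rw [hphi]
        field_simp
        linear_combination (x * phi (n+1) x - Real.sqrt ((n:ℝ)+1) * phi n x)
          * Real.sq_sqrt (show (0:ℝ) ≤ (n:ℝ)+3 by positivity)
          - (x * phi (n+1) x - Real.sqrt ((n:ℝ)+1) * phi n x) * Real.sq_sqrt (show (0:ℝ) ≤ (n:ℝ)+2 by positivity)
  intro n
  exact (H n).1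

lemma omega_hasDerivAt (x : ℝ) : HasDerivAt ω0 (-x * ω0 x) x := by
  have h1 : HasDerivAt (fun y : ℝ => -y ^ 2 / 2) (-x) x := by
    have h : HasDerivAt (fun y : ℝ => -y ^ 2 / 2) (-((2:ℕ) * x ^ (2-1)) / 2) x :=
      ((hasDerivAt_pow 2 x).neg).div_const 2
    convert h using 1
    push_cast; ring
  have h2 := (h1.exp).const_mul (Real.sqrt (2 * Real.pi))⁻¹
  have hrfl : ω0 = fun y => (Real.sqrt (2 * Real.pi))⁻¹ * Real.exp (-y ^ 2 / 2) := rfl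
  rw [hrfl]
  refine h2.congr_deriv (Eq.symm ?_)
  simp [ω0]
  ring

lemma omega_phi_hasDerivAt (b : ℕ) (x : ℝ) :
    HasDerivAt (fun y => phi b y * ω0 y)
      (-(Real.sqrt ((b : ℝ) + 1) * phi (b + 1) x * ω0 x)) x := by
  have hω := omega_hasDerivAt x
  rcases b with _ | b
  · have h0 : (fun y => phi 0 y * ω0 y) = fun y => 1 * ω0 y := by
      funext y; rfl
    rw [h0]
    have := hω.const_mul (1:ℝ)
    refine this.congr_deriv (Eq.symm ?_)
    have h1 : phi 1 x = x := rfl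
    have h00 : ((0:ℕ):ℝ) + 1 = 1 := by norm_num
    rw [h00, h1, Real.sqrt_one]
    ring
  · have hb := phi_hasDerivAt b x
    have hd := hb.mul hω
    refine hd.congr_deriv (Eq.symm ?_)
    have hphi : phi (b + 2) x
        = (x * phi (b + 1) x - Real.sqrt ((b : ℝ) + 1) * phi b x) / Real.sqrt ((b : ℝ) + 2) := rfl
    have hs2 : Real.sqrt ((b : ℝ) + 2) ≠ 0 := by positivity
    have h22 : Real.sqrt ((b : ℝ) + 2) * Real.sqrt ((b : ℝ) + 2) = (b : ℝ) + 2 :=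
      Real.mul_self_sqrt (by positivity)
    have e2 : ((b + 1 : ℕ) : ℝ) + 1 = (b : ℝ) + 2 := by push_cast; ring
    rw [e2, hphi]
    have h22' : Real.sqrt ((b : ℝ) + 2) ^ 2 = (b : ℝ) + 2 :=
      Real.sq_sqrt (by positivity)
    field_simp
    ring

lemma integrableOn_poly_omega (p : Polynomial ℝ) :
    IntegrableOn (fun x => p.eval x * ω0 x) (Set.Ioi (0 : ℝ)) := by
  have key : ∀ n : ℕ, IntegrableOn (fun x : ℝ => x ^ n * Real.exp (-(1/2 : ℝ) * x ^ 2))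
      (Set.Ioi (0 : ℝ)) := by
    intro n
    have h := integrableOn_rpow_mul_exp_neg_mul_sq (b := 1/2) (by norm_num) (s := n)
      (by exact lt_of_lt_of_le (by norm_num) (Nat.cast_nonneg n))
    apply h.congr_fun ?_ measurableSet_Ioi
    intro x hx
    simp [Real.rpow_natCast]
  have big : IntegrableOn (fun x : ℝ =>
      ∑ i ∈ Finset.range (p.natDegree + 1),
        (p.coeff i * (Real.sqrt (2 * Real.pi))⁻¹) * (x ^ i * Real.exp (-(1/2 : ℝ) * x ^ 2)))
      (Set.Ioi (0 : ℝ)) := by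
    apply integrable_finset_sum
    intro i _
    exact ((key i).const_mul _)
  apply big.congr_fun ?_ measurableSet_Ioi
  intro x hx
  simp only
  rw [Polynomial.eval_eq_sum_range, Finset.sum_mul]
  congr 1
  funext i
  simp only [ω0]
  ring_nf

lemma integrableOn_phi_phi_omega (a b : ℕ) :
    IntegrableOn (fun x => phi a x * phi b x * ω0 x) (Set.Ioi (0 : ℝ)) := by
  obtain ⟨p, hp⟩ := phi_poly a
  obtain ⟨q, hq⟩ := phi_poly b
  apply (integrableOn_poly_omega (p * q)).congr_fun ?_ measurableSet_Ioi
  intro x hx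
  simp [hp x, hq x]

lemma tendsto_poly_omega (p : Polynomial ℝ) :
    Filter.Tendsto (fun x => p.eval x * ω0 x) Filter.atTop (nhds 0) := by
  have h1 := Polynomial.tendsto_div_exp_atTop p
  have h2 : Filter.Tendsto (fun x : ℝ => Real.exp (x - x ^ 2 / 2)) Filter.atTop (nhds 0) := by
    apply Real.tendsto_exp_atBot.comp
    have heq : (fun x : ℝ => x - x ^ 2 / 2) = fun x : ℝ => x * (1 + -(x / 2)) := by
      funext x; ring
    rw [heq]
    apply Filter.Tendsto.atTop_mul_atBot₀ Filter.tendsto_id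
    apply Filter.tendsto_atBot_add_const_left
    have hdiv : Filter.Tendsto (fun x : ℝ => x / 2) Filter.atTop Filter.atTop :=
      Filter.Tendsto.atTop_div_const (by norm_num) Filter.tendsto_id
    exact Filter.tendsto_neg_atTop_atBot.comp hdiv
  have h3 : Filter.Tendsto (fun x : ℝ => (p.eval x / Real.exp x) * Real.exp (x - x ^ 2 / 2)
      * (Real.sqrt (2 * Real.pi))⁻¹) Filter.atTop (nhds 0) := by
    have := (h1.mul h2).mul_const (Real.sqrt (2 * Real.pi))⁻¹
    simpa using this
  apply h3.congr
  intro x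
  have hx : Real.exp x ≠ 0 := (Real.exp_pos x).ne'
  simp only [ω0]
  rw [Real.exp_sub]
  have he : Real.exp (-x ^ 2 / 2) * Real.exp (x ^ 2 / 2) = 1 := by
    rw [← Real.exp_add, show -x ^ 2 / 2 + x ^ 2 / 2 = 0 by ring, Real.exp_zero]
  have he' : Real.exp (-(x ^ 2 / 2)) * Real.exp (x ^ 2 / 2) = 1 := by
    rw [← Real.exp_add, show -(x ^ 2 / 2) + x ^ 2 / 2 = 0 by ring, Real.exp_zero]
  field_simp [Real.exp_ne_zero]
  linear_combination (- Polynomial.eval x p) * he'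

lemma tendsto_phi_phi_omega (a b : ℕ) :
    Filter.Tendsto (fun x => phi a x * phi b x * ω0 x) Filter.atTop (nhds 0) := by
  obtain ⟨p, hp⟩ := phi_poly a
  obtain ⟨q, hq⟩ := phi_poly b
  apply (tendsto_poly_omega (p * q)).congr
  intro x
  simp [hp x, hq x]

theorem stmt10 (a b : ℕ) :
    Ih (a + 1) (b + 1)
      = (phi (a + 1) 0 * phi b 0 * ω0 0 + Real.sqrt ((a : ℝ) + 1) * Ih a b)
          / Real.sqrt ((b : ℝ) + 1) := by
  set F : ℝ → ℝ := fun x => phi (a + 1) x * (phi b x * ω0 x) with hF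
  set F' : ℝ → ℝ := fun x => Real.sqrt ((a : ℝ) + 1) * (phi a x * phi b x * ω0 x)
      - Real.sqrt ((b : ℝ) + 1) * (phi (a + 1) x * phi (b + 1) x * ω0 x) with hF'
  have hderiv : ∀ x : ℝ, HasDerivAt F (F' x) x := by
    intro x
    have h := (phi_hasDerivAt a x).mul (omega_phi_hasDerivAt b x)
    refine h.congr_deriv (Eq.symm ?_)
    simp only [hF']
    ring
  have hint1 := integrableOn_phi_phi_omega a b
  have hint2 := integrableOn_phi_phi_omega (a + 1) (b + 1)
  have hintF' : IntegrableOn F' (Set.Ioi (0 : ℝ)) :=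
    (hint1.const_mul _).sub (hint2.const_mul _)
  have htend : Filter.Tendsto F Filter.atTop (nhds 0) := by
    have := tendsto_phi_phi_omega (a + 1) b
    apply this.congr
    intro x; simp only [hF]; ring
  have key : ∫ x in Set.Ioi (0 : ℝ), F' x = 0 - F 0 :=
    integral_Ioi_of_hasDerivAt_of_tendsto
      (hderiv 0).continuousAt.continuousWithinAt
      (fun x _ => hderiv x) hintF' htend
  have hsplit : ∫ x in Set.Ioi (0 : ℝ), F' x
      = Real.sqrt ((a : ℝ) + 1) * Ih a b - Real.sqrt ((b : ℝ) + 1) * Ih (a + 1) (b + 1) := by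
    simp only [hF']
    rw [integral_sub (hint1.const_mul _) (hint2.const_mul _),
      integral_const_mul, integral_const_mul]
    rfl
  have hb1 : Real.sqrt ((b : ℝ) + 1) ≠ 0 := by positivity
  have hkey : Real.sqrt ((a : ℝ) + 1) * Ih a b - Real.sqrt ((b : ℝ) + 1) * Ih (a + 1) (b + 1)
      = - (phi (a + 1) 0 * phi b 0 * ω0 0) := by
    rw [← hsplit, key]
    simp only [hF]
    ring
  field_simp
  linarith [hkey]
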